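/- Let S be an affine semigroup and x ∈ S \ {0}. Then S \ {x} is an affine semigroup if and only if x is a minimal generator of S. -/

import Mathlib

open Pointwise

/-- `S` is an affine semigroup: a finitely generated additive submonoid of `ℕ^p`
(containing `0`). -/
def IsAffine {p : ℕ} (S : Set (Fin p → ℕ)) : Prop :=
  ∃ F : Finset (Fin p → ℕ),
    S = (AddSubmonoid.closure (F : Set (Fin p → ℕ)) : Set (Fin p → ℕ))

/-- The set of integer points of the rational cone generated by `S`:
`x` is a non-negative rational combination of elements of `S` iff some positive
multiple of `x` lies in the additive monoid generated by `S`. -/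
def coneOf {p : ℕ} (S : Set (Fin p → ℕ)) : Set (Fin p → ℕ) :=
  {x | ∃ n : ℕ, 0 < n ∧ n • x ∈ AddSubmonoid.closure S}

/-- A `𝒞`-semigroup: an affine semigroup with finite complement in its cone. -/
def CSemigroup {p : ℕ} (S : Set (Fin p → ℕ)) : Prop :=
  IsAffine S ∧ (coneOf S \ S).Finite

/-- `P` is an ideal of `S`: `P ⊆ S` and `P + S ⊆ P`. -/
def IsIdealOf {p : ℕ} (S P : Set (Fin p → ℕ)) : Prop :=
  P ⊆ S ∧ P + S ⊆ P

/-- `x ≤_S y` iff `y - x ∈ S`. -/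
def leS {p : ℕ} (S : Set (Fin p → ℕ)) (x y : Fin p → ℕ) : Prop :=
  ∃ s ∈ S, x + s = y

/-- A non-empty subset `X ⊆ S` is `S`-incomparable if `x - x' ∉ S` for all
distinct `x, x' ∈ X`. -/
def SIncomparable {p : ℕ} (S X : Set (Fin p → ℕ)) : Prop :=
  X.Nonempty ∧ X ⊆ S ∧ ∀ x ∈ X, ∀ x' ∈ X, x ≠ x' → ¬ leS S x' x

/-- The minimal generating set of `T`: non-zero elements of `T` that are not a
sum of two non-zero elements of `T`. -/
def msg {p : ℕ} (T : Set (Fin p → ℕ)) : Set (Fin p → ℕ) :=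
  {x ∈ T | x ≠ 0 ∧ ¬ ∃ a ∈ T, ∃ b ∈ T, a ≠ 0 ∧ b ≠ 0 ∧ x = a + b}

/-- The Apery set `Ap(S, m) = {s ∈ S : s - m ∉ S}`. -/
def Ap {p : ℕ} (S : Set (Fin p → ℕ)) (m : Fin p → ℕ) : Set (Fin p → ℕ) :=
  {s ∈ S | ¬ ∃ u ∈ S, m + u = s}

/-- `τ` is an extremal ray of the cone `C`: the set of points of `C` lying on the
ray spanned by some non-zero `v ∈ C`, such that whenever a sum of two elements of
`C` lies in `τ`, both summands lie in `τ`. -/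
def IsExtremalRay {p : ℕ} (C τ : Set (Fin p → ℕ)) : Prop :=
  (∃ v : Fin p → ℕ, v ≠ 0 ∧ v ∈ C ∧
    τ = {x ∈ C | ∃ a b : ℕ, 0 < b ∧ b • x = a • v}) ∧
  ∀ x ∈ C, ∀ y ∈ C, x + y ∈ τ → x ∈ τ ∧ y ∈ τ

/-- `τ 1, …, τ t` are (exactly) the extremal rays of the cone `C`. -/
def RaysOf {p t : ℕ} (C : Set (Fin p → ℕ)) (τ : Fin t → Set (Fin p → ℕ)) : Prop :=
  (∀ i, IsExtremalRay C (τ i)) ∧ Function.Injective τ ∧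
    ∀ ρ, IsExtremalRay C ρ → ∃ i, ρ = τ i

/-- `m` is the `i`-multiplicity of `T` along the ray `τ`: the minimum non-zero
element of `τ ∩ T` for the componentwise order. -/
def MultOn {p : ℕ} (τ T : Set (Fin p → ℕ)) (m : Fin p → ℕ) : Prop :=
  m ∈ τ ∧ m ∈ T ∧ m ≠ 0 ∧ ∀ x ∈ τ ∩ T, x ≠ 0 → m ≤ x

/-- `T` is an `I(S)`-semigroup: an affine semigroup such that `T \ {0}` is an
ideal of `S`. -/
def ISemigroupOf {p : ℕ} (S T : Set (Fin p → ℕ)) : Prop :=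
  IsAffine T ∧ 0 ∈ T ∧ IsIdealOf S (T \ {0})

/-- `le` is a monomial order on `ℕ^p`: a total order compatible with addition in
which `0` is the least element. -/
def IsMonomialOrder {p : ℕ} (le : (Fin p → ℕ) → (Fin p → ℕ) → Prop) : Prop :=
  (∀ x, le x x) ∧ (∀ x y z, le x y → le y z → le x z) ∧
  (∀ x y, le x y → le y x → x = y) ∧ (∀ x y, le x y ∨ le y x) ∧
  (∀ x y z, le x y → le (x + z) (y + z)) ∧ (∀ x, le 0 x)

/-- The pseudo-Frobenius elements of `T`. -/
def PF {p : ℕ} (T : Set (Fin p → ℕ)) : Set (Fin p → ℕ) :=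
  {x ∈ coneOf T \ T | ∀ y ∈ T, y ≠ 0 → x + y ∈ T}

/-- For an affine semigroup `S` and `x ∈ S \ {0}`, the set `S \ {x}` is an
affine semigroup iff `x` is a minimal generator of `S`. -/
theorem statement12 {p : ℕ} (S : Set (Fin p → ℕ)) (hS : IsAffine S)
    (x : Fin p → ℕ) (hx : x ∈ S \ {0}) :
    IsAffine (S \ {x}) ↔ x ∈ msg S := by
  obtain ⟨hxS, hx0'⟩ := hx
  have hx0 : x ≠ 0 := hx0'
  constructor
  · rintro ⟨G, hG⟩
    refine ⟨hxS, hx0, ?_⟩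
    rintro ⟨a, haS, b, hbS, ha0, hb0, hab⟩
    have hax : a ≠ x := fun h => by
      rw [h] at hab; exact hb0 (left_eq_add.mp hab)
    have hbx : b ≠ x := fun h => by
      rw [h] at hab; exact ha0 (right_eq_add.mp hab)
    have ha' : a ∈ S \ {x} := ⟨haS, hax⟩
    have hb' : b ∈ S \ {x} := ⟨hbS, hbx⟩
    rw [hG] at ha' hb'
    have hsum : a + b ∈ AddSubmonoid.closure (G : Set (Fin p → ℕ)) := add_mem ha' hb'
    have hsum' : a + b ∈ S \ {x} := by rw [hG]; exact hsum
    exact hsum'.2 hab.symm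
  · rintro ⟨-, -, hmin⟩
    obtain ⟨F, hF⟩ := hS
    have hSadd : ∀ a ∈ S, ∀ b ∈ S, a + b ∈ S := by
      intro a ha b hb; rw [hF] at ha hb ⊢; exact add_mem ha hb
    have hFS : ∀ f ∈ F, f ∈ S := by
      intro f hf; rw [hF]; exact AddSubmonoid.subset_closure hf
    have hxxS : x + x ∈ S := hSadd x hxS x hxS
    have hxx0 : x + x ≠ 0 := fun h => hx0 (by
      funext i; have := congrFun h i
      simp only [Pi.add_apply, Pi.zero_apply] at this
      show x i = 0; omega)
    set F' := F.erase x with hF'def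
    set G : Finset (Fin p → ℕ) :=
      (F' ∪ {x + x, x + x + x}) ∪ (F'.filter (fun f => f ≠ 0)).image (fun f => x + f)
      with hGdef
    set C := AddSubmonoid.closure (G : Set (Fin p → ℕ)) with hCdef
    have hxxC : x + x ∈ C := AddSubmonoid.subset_closure (by simp [hGdef])
    have hxxxC : x + x + x ∈ C := AddSubmonoid.subset_closure (by simp [hGdef])
    have hF'C : ∀ f ∈ F', f ∈ C := fun f hf =>
      AddSubmonoid.subset_closure (by simp [hGdef, hf])
    have himC : ∀ f ∈ F', f ≠ 0 → x + f ∈ C := fun f hf h0 =>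
      AddSubmonoid.subset_closure (by
        simp only [hGdef, Finset.coe_union, Set.mem_union, Finset.coe_image,
          Set.mem_image, Finset.mem_coe, Finset.mem_filter]
        exact Or.inr ⟨f, ⟨hf, h0⟩, rfl⟩)
    -- key: adding x to a nonzero element of C stays in C
    have hkey : ∀ g ∈ C, g ≠ 0 → x + g ∈ C := by
      let V : AddSubmonoid (Fin p → ℕ) :=
        { carrier := {g | g ∈ C ∧ (g ≠ 0 → x + g ∈ C)}
          zero_mem' := ⟨zero_mem C, fun h => absurd rfl h⟩
          add_mem' := by
            rintro a b ⟨haC, ha⟩ ⟨hbC, hb⟩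
            refine ⟨add_mem haC hbC, fun hab => ?_⟩
            by_cases ha0 : a = 0
            · subst ha0; rw [zero_add] at hab ⊢
              exact hb hab
            · rw [← add_assoc]; exact add_mem (ha ha0) hbC }
      have hGV : (G : Set (Fin p → ℕ)) ⊆ (V : Set (Fin p → ℕ)) := by
        intro g hg
        have hgC : g ∈ C := AddSubmonoid.subset_closure hg
        refine ⟨hgC, fun hg0 => ?_⟩
        simp only [hGdef, Finset.coe_union, Set.mem_union, Finset.coe_image,
          Set.mem_image, Finset.mem_coe, Finset.mem_union, Finset.mem_insert,
          Finset.mem_singleton, Finset.mem_filter, Finset.coe_insert,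
          Set.mem_insert_iff, Finset.coe_singleton, Set.mem_singleton_iff] at hg
        rcases hg with (hg | hg | hg) | ⟨f, ⟨hf, hf0⟩, rfl⟩
        · exact himC g hg hg0
        · subst hg; rw [← add_assoc]; exact hxxxC
        · subst hg
          have h4 : x + (x + x + x) = (x + x) + (x + x) := by ring
          rw [h4]; exact add_mem hxxC hxxC
        · rw [← add_assoc]; exact add_mem hxxC (hF'C f hf)
      exact fun g hgC => ((AddSubmonoid.closure_le.mpr hGV) hgC).2
    -- S ⊆ C ∪ {x}
    have hSU : ∀ s ∈ S, s ∈ C ∨ s = x := by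
      let U : AddSubmonoid (Fin p → ℕ) :=
        { carrier := {y | y ∈ C ∨ y = x}
          zero_mem' := Or.inl (zero_mem C)
          add_mem' := by
            rintro a b (haC | rfl) (hbC | rfl)
            · exact Or.inl (add_mem haC hbC)
            · by_cases ha0 : a = 0
              · subst ha0; rw [zero_add]; exact Or.inr rfl
              · exact Or.inl (by rw [add_comm]; exact hkey a haC ha0)
            · by_cases hb0 : b = 0
              · subst hb0; rw [add_zero]; exact Or.inr rfl
              · exact Or.inl (hkey b hbC hb0)
            · exact Or.inl hxxC }
      intro s hs
      have hFU : (F : Set (Fin p → ℕ)) ⊆ (U : Set (Fin p → ℕ)) := by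
        intro f hf
        by_cases hfx : f = x
        · exact Or.inr hfx
        · exact Or.inl (hF'C f (Finset.mem_erase.mpr ⟨hfx, Finset.mem_coe.mp hf⟩))
      rw [hF] at hs
      exact AddSubmonoid.closure_le.mpr hFU hs
    refine ⟨G, ?_⟩
    apply Set.eq_of_subset_of_subset
    · rintro s ⟨hsS, hsx⟩
      rcases hSU s hsS with h | h
      · exact h
      · exact absurd h hsx
    · -- C ⊆ S \ {x}
      let T : AddSubmonoid (Fin p → ℕ) :=
        { carrier := S \ {x}
          zero_mem' := ⟨by rw [hF]; exact zero_mem _, fun h => hx0 (Eq.symm h)⟩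
          add_mem' := by
            rintro a b ⟨haS, hax⟩ ⟨hbS, hbx⟩
            refine ⟨hSadd a haS b hbS, fun hab => ?_⟩
            have hab' : a + b = x := hab
            have ha0 : a ≠ 0 := fun h => hbx (show b ∈ ({x} : Set (Fin p → ℕ)) by
              rw [h, zero_add] at hab'; exact hab')
            have hb0 : b ≠ 0 := fun h => hax (show a ∈ ({x} : Set (Fin p → ℕ)) by
              rw [h, add_zero] at hab'; exact hab')
            exact hmin ⟨a, haS, b, hbS, ha0, hb0, hab'.symm⟩ }
      have hGT : (G : Set (Fin p → ℕ)) ⊆ (T : Set (Fin p → ℕ)) := by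
        intro g hg
        simp only [hGdef, Finset.coe_union, Set.mem_union, Finset.coe_image,
          Set.mem_image, Finset.mem_coe, Finset.mem_union, Finset.mem_insert,
          Finset.mem_singleton, Finset.mem_filter, Finset.coe_insert,
          Set.mem_insert_iff, Finset.coe_singleton, Set.mem_singleton_iff] at hg
        rcases hg with (hg | hg | hg) | ⟨f, ⟨hf, hf0⟩, rfl⟩
        · exact ⟨hFS g (Finset.mem_of_mem_erase hg),
            fun h => (Finset.ne_of_mem_erase hg) h⟩
        · subst hg
          exact ⟨hxxS, fun h => hx0 (add_eq_right.mp h)⟩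
        · subst hg
          exact ⟨hSadd _ hxxS x hxS, fun h => hxx0 (add_eq_right.mp h)⟩
        · exact ⟨hSadd x hxS f (hFS f (Finset.mem_of_mem_erase hf)),
            fun h => hf0 (add_eq_left.mp h)⟩
      exact AddSubmonoid.closure_le.mpr hGT
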